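/- Let N ≥ 1 and let x, y : Fin N → ℝ satisfy y_n ≤ x_n for every n, with y ≠ x. Then y↓ is strictly smaller than x↓ in the lexicographic order on Fin N → ℝ, where v↓ denotes the vector v with components rearranged in nonincreasing order. -/

import Mathlib

/-- `sortDesc v` is `v` with its components rearranged in nonincreasing order:
its `j`-th component is the `j`-th largest component of `v`. -/
noncomputable def sortDesc {N : ℕ} (v : Fin N → ℝ) : Fin N → ℝ :=
  fun j => v (Tuple.sort v (Fin.rev j))

private lemma sorted_le_sorted {N : ℕ} (x y : Fin N → ℝ) (hle : ∀ n, y n ≤ x n) (k : Fin N) :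
    y (Tuple.sort y k) ≤ x (Tuple.sort x k) := by
  classical
  set X : Fin N → ℝ := x ∘ Tuple.sort x with hX
  set Y : Fin N → ℝ := y ∘ Tuple.sort y with hY
  have hXm : Monotone X := Tuple.monotone_sort x
  have hYm : Monotone Y := Tuple.monotone_sort y
  set a : ℝ := X k with ha
  have h1 : (k : ℕ) < Fintype.card {i // X i ≤ a} :=
    by rw [Fintype.card_subtype]; exact (Tuple.lt_card_le_iff_apply_le_of_monotone (a := a) (j := k) hXm).2 le_rfl
  have hcardX : Fintype.card {i // X i ≤ a} = Fintype.card {i // x i ≤ a} :=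
    Fintype.card_congr ((Tuple.sort x).subtypeEquiv (fun i => Iff.rfl))
  have hsub : Fintype.card {i // x i ≤ a} ≤ Fintype.card {i // y i ≤ a} := by
    exact Fintype.card_subtype_mono _ _ (fun i hi => (hle i).trans hi)
  have hcardY : Fintype.card {i // y i ≤ a} = Fintype.card {i // Y i ≤ a} :=
    (Fintype.card_congr ((Tuple.sort y).subtypeEquiv (fun i => Iff.rfl))).symm
  have h2 : (k : ℕ) < Fintype.card {i // Y i ≤ a} := by omega
  rw [Fintype.card_subtype] at h2
  exact (Tuple.lt_card_le_iff_apply_le_of_monotone (a := a) (j := k) hYm).1 h2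

private lemma sum_sortDesc {N : ℕ} (v : Fin N → ℝ) :
    (∑ j, sortDesc v j) = ∑ j, v j := by
  unfold sortDesc
  rw [Fintype.sum_equiv Fin.revPerm (fun j => v (Tuple.sort v (Fin.rev j)))
    (fun j => v (Tuple.sort v j)) (fun j => rfl)]
  exact Fintype.sum_equiv (Tuple.sort v) _ _ (fun j => rfl)

/-- If `y` dominates `x` componentwise (`y n ≤ x n` for all `n`) and `y ≠ x`, then the
nonincreasing rearrangement of `y` is strictly lexicographically smaller than that of `x`. -/
theorem sortDesc_lt_of_le_of_ne {N : ℕ} (hN : 1 ≤ N) (x y : Fin N → ℝ)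
    (hle : ∀ n, y n ≤ x n) (hne : y ≠ x) :
    toLex (sortDesc y) < toLex (sortDesc x) := by
  have hle' : sortDesc y ≤ sortDesc x := fun j => sorted_le_sorted x y hle (Fin.rev j)
  have hsum : (∑ j, y j) < ∑ j, x j := by
    obtain ⟨n, hn⟩ : ∃ n, y n ≠ x n := Function.ne_iff.1 hne
    exact Finset.sum_lt_sum (fun i _ => hle i) ⟨n, Finset.mem_univ n, lt_of_le_of_ne (hle n) hn⟩
  have hne' : sortDesc y ≠ sortDesc x := by
    intro h
    rw [← sum_sortDesc y, ← sum_sortDesc x, h] at hsum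
    exact lt_irrefl _ hsum
  haveI : WellFoundedLT (Fin N) := inferInstance
  exact Pi.toLex_strictMono (lt_of_le_of_ne hle' hne')
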